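/- Fix real parameters α, ξ, ν and let u be a normalized (α,ξ,ν)-eigenfunction. Then the first two moments satisfy M₁ = ∫₀^∞ (ξ−t)u(t)² dt = (u(0)²/2)( ξ² + 1 − ν − (α−ξ)² ) and M₂ = ∫₀^∞ (ξ−t)²u(t)² dt = (ν−1)/2 + (u(0)²/4)( −(α−ξ) + ξ( ξ² + 1 − ν − (α−ξ)² ) ). -/

import Mathlib

open MeasureTheory

/-- An `(α,ξ,ν)`-eigenfunction: a smooth function on `ℝ` which, together with all its
derivatives, decays faster than any polynomial on `[0,∞)`, solves
`−u'' + ((ξ−t)² + 1)u = νu` on `[0,∞)`, and satisfies the Robin condition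
`u'(0) = (α−ξ)u(0)`. -/
def IsEigen (α ξ ν : ℝ) (u : ℝ → ℝ) : Prop :=
  ContDiff ℝ (⊤ : ℕ∞) u ∧
  (∀ n k : ℕ, ∃ C : ℝ, ∀ t : ℝ, 0 ≤ t → |t| ^ k * |iteratedDeriv n u t| ≤ C) ∧
  (∀ t : ℝ, 0 ≤ t → -(deriv (deriv u) t) + ((ξ - t) ^ 2 + 1) * u t = ν * u t) ∧
  deriv u 0 = (α - ξ) * u 0



/-- Rapid decay on `[0,∞)`. -/
private def Rdec (f : ℝ → ℝ) : Prop := ∀ k : ℕ, ∃ C : ℝ, ∀ t : ℝ, 0 ≤ t → t ^ k * |f t| ≤ C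

private lemma Rdec.of_eq {v w : ℝ → ℝ} (hv : Rdec v) (h : ∀ t, w t = v t) : Rdec w := by
  intro k
  obtain ⟨C, hC⟩ := hv k
  exact ⟨C, fun t ht => by rw [h]; exact hC t ht⟩

private lemma Rdec.mul {v w : ℝ → ℝ} (hv : Rdec v) (hw : Rdec w) :
    Rdec (fun t => v t * w t) := by
  intro k
  obtain ⟨C, hC⟩ := hv k
  obtain ⟨D, hD⟩ := hw 0
  have hC0 : 0 ≤ C := le_trans (by positivity) (hC 1 zero_le_one)
  refine ⟨C * D, fun t ht => ?_⟩
  have h1 := hC t ht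
  have h2 := hD t ht
  simp only [pow_zero, one_mul] at h2
  calc t ^ k * |v t * w t| = (t ^ k * |v t|) * |w t| := by rw [abs_mul]; ring
    _ ≤ C * D := mul_le_mul h1 h2 (abs_nonneg _) hC0

private lemma Rdec.shift {v : ℝ → ℝ} (ξ : ℝ) (hv : Rdec v) :
    Rdec (fun t => (ξ - t) * v t) := by
  intro k
  obtain ⟨C, hC⟩ := hv k
  obtain ⟨D, hD⟩ := hv (k + 1)
  refine ⟨|ξ| * C + D, fun t ht => ?_⟩
  have h1 := hC t ht
  have h2 := hD t ht
  have habs : |ξ - t| ≤ |ξ| + t := by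
    calc |ξ - t| ≤ |ξ| + |t| := abs_sub ξ t
      _ = |ξ| + t := by rw [abs_of_nonneg ht]
  have hvn : 0 ≤ |v t| := abs_nonneg _
  have htk : 0 ≤ t ^ k := pow_nonneg ht k
  calc t ^ k * |(ξ - t) * v t| = (t ^ k * |v t|) * |ξ - t| := by rw [abs_mul]; ring
    _ ≤ (t ^ k * |v t|) * (|ξ| + t) := by
        exact mul_le_mul_of_nonneg_left habs (by positivity)
    _ = |ξ| * (t ^ k * |v t|) + t ^ (k + 1) * |v t| := by ring
    _ ≤ |ξ| * C + D := by
        have := mul_le_mul_of_nonneg_left h1 (abs_nonneg ξ)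
        linarith

private lemma Rdec.const_mul {v : ℝ → ℝ} (c : ℝ) (hv : Rdec v) :
    Rdec (fun t => c * v t) := by
  intro k
  obtain ⟨C, hC⟩ := hv k
  refine ⟨|c| * C, fun t ht => ?_⟩
  have h1 := hC t ht
  calc t ^ k * |c * v t| = |c| * (t ^ k * |v t|) := by rw [abs_mul]; ring
    _ ≤ |c| * C := mul_le_mul_of_nonneg_left h1 (abs_nonneg c)

private lemma Rdec.add {v w : ℝ → ℝ} (hv : Rdec v) (hw : Rdec w) :
    Rdec (fun t => v t + w t) := by
  intro k
  obtain ⟨C, hC⟩ := hv k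
  obtain ⟨D, hD⟩ := hw k
  refine ⟨C + D, fun t ht => ?_⟩
  have h1 := hC t ht
  have h2 := hD t ht
  have : |v t + w t| ≤ |v t| + |w t| := abs_add_le _ _
  nlinarith [pow_nonneg ht k]

private lemma Rdec.integrableOn {f : ℝ → ℝ} (hf : Rdec f) (hc : Continuous f) :
    IntegrableOn f (Set.Ioi (0 : ℝ)) volume := by
  obtain ⟨C0, h0⟩ := hf 0
  obtain ⟨C2, h2⟩ := hf 2
  have hg : Integrable (fun x : ℝ => (C0 + C2) * (1 + x ^ 2)⁻¹)
      (volume.restrict (Set.Ioi (0 : ℝ))) :=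
    (integrable_inv_one_add_sq.restrict).const_mul _
  refine Integrable.mono' hg (hc.aestronglyMeasurable.restrict) ?_
  rw [ae_restrict_iff' measurableSet_Ioi]
  refine ae_of_all _ fun t ht => ?_
  have ht' : (0 : ℝ) ≤ t := le_of_lt ht
  have h1x : (0 : ℝ) < 1 + t ^ 2 := by positivity
  have hb0 := h0 t ht'
  have hb2 := h2 t ht'
  simp only [pow_zero, one_mul] at hb0
  rw [Real.norm_eq_abs, show (C0 + C2) * (1 + t ^ 2)⁻¹ = (C0 + C2) / (1 + t ^ 2) by ring,
    le_div_iff₀ h1x]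
  nlinarith [abs_nonneg (f t)]

private lemma Rdec.tendsto {f : ℝ → ℝ} (hf : Rdec f) :
    Filter.Tendsto f Filter.atTop (nhds 0) := by
  obtain ⟨C, hC⟩ := hf 1
  refine squeeze_zero_norm' ?_ (tendsto_const_nhds.div_atTop (g := fun t : ℝ => t)
    Filter.tendsto_id (a := C))
  filter_upwards [Filter.eventually_ge_atTop (1 : ℝ)] with t ht
  have h1 := hC t (by linarith)
  rw [pow_one] at h1
  rw [Real.norm_eq_abs, le_div_iff₀ (by linarith : (0:ℝ) < t)]
  linarith [mul_comm t (|f t|) ▸ h1]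


/-- The first two moments of a normalized `(α,ξ,ν)`-eigenfunction:
`M₁ = (u(0)²/2)(ξ² + 1 − ν − (α−ξ)²)` and
`M₂ = (ν−1)/2 + (u(0)²/4)(−(α−ξ) + ξ(ξ² + 1 − ν − (α−ξ)²))`. -/
theorem moments_one_two
    (α ξ ν : ℝ) (u : ℝ → ℝ) (hu : IsEigen α ξ ν u)
    (hnorm : ∫ t in Set.Ioi (0 : ℝ), u t ^ 2 = 1) :
    (∫ t in Set.Ioi (0 : ℝ), (ξ - t) * u t ^ 2
        = u 0 ^ 2 / 2 * (ξ ^ 2 + 1 - ν - (α - ξ) ^ 2)) ∧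
    (∫ t in Set.Ioi (0 : ℝ), (ξ - t) ^ 2 * u t ^ 2
        = (ν - 1) / 2
          + u 0 ^ 2 / 4 * (-(α - ξ) + ξ * (ξ ^ 2 + 1 - ν - (α - ξ) ^ 2))) := by
  obtain ⟨hsm, hdec, hODE, hRobin⟩ := hu
  -- smoothness facts
  have hd1 : Differentiable ℝ u := hsm.differentiable (by simp)
  have hsm' : ContDiff ℝ (⊤ : ℕ∞) (deriv u) := (contDiff_infty_iff_deriv.mp hsm).2
  have hd2 : Differentiable ℝ (deriv u) := hsm'.differentiable (by simp)
  have hcu : Continuous u := hsm.continuous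
  have hcv : Continuous (deriv u) := hsm'.continuous
  have hcw : Continuous (deriv (deriv u)) := (contDiff_infty_iff_deriv.mp hsm').2.continuous
  have hduv : ∀ t : ℝ, HasDerivAt u (deriv u t) t := fun t => (hd1 t).hasDerivAt
  have hdvw : ∀ t : ℝ, HasDerivAt (deriv u) (deriv (deriv u) t) t :=
    fun t => (hd2 t).hasDerivAt
  -- the ODE
  have hode : ∀ t : ℝ, 0 ≤ t → deriv (deriv u) t = ((ξ - t) ^ 2 + 1 - ν) * u t := by
    intro t ht
    have h := hODE t ht
    linear_combination -h
  -- rapid decay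
  have hRu : Rdec u := by
    intro k
    obtain ⟨C, hC⟩ := hdec 0 k
    refine ⟨C, fun t ht => ?_⟩
    have := hC t ht
    simpa [iteratedDeriv_zero, abs_of_nonneg ht] using this
  have hRv : Rdec (deriv u) := by
    intro k
    obtain ⟨C, hC⟩ := hdec 1 k
    refine ⟨C, fun t ht => ?_⟩
    have := hC t ht
    simpa [iteratedDeriv_one, abs_of_nonneg ht] using this
  -- the three auxiliary functions
  set F₁ : ℝ → ℝ := fun t => (deriv u t) ^ 2 - ((ξ - t) ^ 2 + 1 - ν) * (u t) ^ 2 with hF₁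
  set F₂ : ℝ → ℝ := fun t => u t * deriv u t with hF₂
  set F₃ : ℝ → ℝ := fun t => (ξ - t) * ((deriv u t) ^ 2 - ((ξ - t) ^ 2 + 1 - ν) * (u t) ^ 2)
    with hF₃
  set g₁ : ℝ → ℝ := fun t => 2 * ((ξ - t) * u t ^ 2) with hg₁
  set g₂ : ℝ → ℝ := fun t => (deriv u t) ^ 2 + ((ξ - t) ^ 2 + 1 - ν) * u t ^ 2 with hg₂
  set g₃ : ℝ → ℝ := fun t => -(deriv u t) ^ 2 + (3 * (ξ - t) ^ 2 + 1 - ν) * u t ^ 2 with hg₃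
  -- derivative of the polynomial coefficient
  have hP : ∀ t : ℝ, HasDerivAt (fun s => (ξ - s) ^ 2 + 1 - ν) (2 * (ξ - t) * (-1)) t := by
    intro t
    have h := (((hasDerivAt_id t).const_sub ξ).pow 2)
    have h' := (h.add_const 1).sub_const ν
    refine h'.congr_deriv ?_
    norm_num
  -- derivatives of F₁, F₂, F₃ on [0,∞)
  have hF₁d : ∀ t : ℝ, 0 ≤ t → HasDerivAt F₁ (g₁ t) t := by
    intro t ht
    have h1 := (hdvw t).pow 2
    have h3 := (hduv t).pow 2
    have H := h1.sub ((hP t).mul h3)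
    refine H.congr_deriv ?_
    rw [hode t ht]
    simp only [hg₁, Pi.pow_apply]
    push_cast
    ring
  have hF₂d : ∀ t : ℝ, 0 ≤ t → HasDerivAt F₂ (g₂ t) t := by
    intro t ht
    have H := (hduv t).mul (hdvw t)
    refine H.congr_deriv ?_
    rw [hode t ht]
    ring
  have hF₃d : ∀ t : ℝ, 0 ≤ t → HasDerivAt F₃ (g₃ t) t := by
    intro t ht
    have hlin : HasDerivAt (fun s : ℝ => ξ - s) (-1) t := (hasDerivAt_id t).const_sub ξ
    have H := hlin.mul (hF₁d t ht)
    refine H.congr_deriv ?_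
    simp only [hF₁, hg₁, hg₃]
    ring
  -- decay of the auxiliary functions and integrands
  have hRu2 : Rdec (fun t => u t * u t) := hRu.mul hRu
  have hRF₁ : Rdec F₁ := by
    have h : Rdec (fun t => deriv u t * deriv u t +
        (-1 : ℝ) * ((ξ - t) * ((ξ - t) * (u t * u t)) + (1 - ν) * (u t * u t))) :=
      (hRv.mul hRv).add (Rdec.const_mul _ (((hRu2.shift ξ).shift ξ).add (hRu2.const_mul _)))
    exact h.of_eq fun t => by simp only [hF₁]; ring
  have hRF₂ : Rdec F₂ := hRu.mul hRv
  have hRF₃ : Rdec F₃ := hRF₁.shift ξ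
  have hRg₁ : Rdec g₁ := by
    have h : Rdec (fun t => 2 * ((ξ - t) * (u t * u t))) :=
      Rdec.const_mul _ (hRu2.shift ξ)
    exact h.of_eq fun t => by simp only [hg₁]; ring
  have hRg₂ : Rdec g₂ := by
    have h : Rdec (fun t => deriv u t * deriv u t +
        ((ξ - t) * ((ξ - t) * (u t * u t)) + (1 - ν) * (u t * u t))) :=
      (hRv.mul hRv).add (((hRu2.shift ξ).shift ξ).add (hRu2.const_mul _))
    exact h.of_eq fun t => by simp only [hg₂]; ring
  have hRg₃ : Rdec g₃ := by
    have h : Rdec (fun t => (-1 : ℝ) * (deriv u t * deriv u t) +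
        (3 * ((ξ - t) * ((ξ - t) * (u t * u t))) + (1 - ν) * (u t * u t))) :=
      ((hRv.mul hRv).const_mul _).add
        ((((hRu2.shift ξ).shift ξ).const_mul _).add (hRu2.const_mul _))
    exact h.of_eq fun t => by simp only [hg₃]; ring
  -- continuity
  have hcP : Continuous (fun t : ℝ => (ξ - t) ^ 2 + 1 - ν) :=
    (((continuous_const.sub continuous_id).pow 2).add continuous_const).sub continuous_const
  have hcF₁ : Continuous F₁ := (hcv.pow 2).sub (hcP.mul (hcu.pow 2))
  have hcF₂ : Continuous F₂ := hcu.mul hcv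
  have hcF₃ : Continuous F₃ := (continuous_const.sub continuous_id).mul hcF₁
  have hcg₁ : Continuous g₁ :=
    continuous_const.mul ((continuous_const.sub continuous_id).mul (hcu.pow 2))
  have hcg₂ : Continuous g₂ := (hcv.pow 2).add (hcP.mul (hcu.pow 2))
  have hcg₃ : Continuous g₃ := ((hcv.pow 2).neg).add
    ((((continuous_const.mul ((continuous_const.sub continuous_id).pow 2)).add
      continuous_const).sub continuous_const).mul (hcu.pow 2))
  -- integrability
  have hig₁ : IntegrableOn g₁ (Set.Ioi (0 : ℝ)) volume := hRg₁.integrableOn hcg₁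
  have hig₂ : IntegrableOn g₂ (Set.Ioi (0 : ℝ)) volume := hRg₂.integrableOn hcg₂
  have hig₃ : IntegrableOn g₃ (Set.Ioi (0 : ℝ)) volume := hRg₃.integrableOn hcg₃
  -- the three FTC identities
  have eq₁ : ∫ t in Set.Ioi (0 : ℝ), g₁ t = 0 - F₁ 0 :=
    integral_Ioi_of_hasDerivAt_of_tendsto hcF₁.continuousWithinAt
      (fun x hx => hF₁d x (le_of_lt hx)) hig₁ hRF₁.tendsto
  have eq₂ : ∫ t in Set.Ioi (0 : ℝ), g₂ t = 0 - F₂ 0 :=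
    integral_Ioi_of_hasDerivAt_of_tendsto hcF₂.continuousWithinAt
      (fun x hx => hF₂d x (le_of_lt hx)) hig₂ hRF₂.tendsto
  have eq₃ : ∫ t in Set.Ioi (0 : ℝ), g₃ t = 0 - F₃ 0 :=
    integral_Ioi_of_hasDerivAt_of_tendsto hcF₃.continuousWithinAt
      (fun x hx => hF₃d x (le_of_lt hx)) hig₃ hRF₃.tendsto
  -- first moment
  have hI1 : (2 : ℝ) * ∫ t in Set.Ioi (0 : ℝ), (ξ - t) * u t ^ 2 = 0 - F₁ 0 := by
    rw [← integral_const_mul]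
    exact eq₁
  have goal1 : ∫ t in Set.Ioi (0 : ℝ), (ξ - t) * u t ^ 2
      = u 0 ^ 2 / 2 * (ξ ^ 2 + 1 - ν - (α - ξ) ^ 2) := by
    have hF₁0 : F₁ 0 = (deriv u 0) ^ 2 - (ξ ^ 2 + 1 - ν) * (u 0) ^ 2 := by
      simp [hF₁]
    rw [hF₁0] at hI1
    linear_combination hI1 / 2 - (deriv u 0 + (α - ξ) * u 0) / 2 * hRobin
  -- second moment: combine eq₂ and eq₃
  have hisq : IntegrableOn (fun t : ℝ => (ξ - t) ^ 2 * u t ^ 2) (Set.Ioi (0 : ℝ)) volume := by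
    refine Rdec.integrableOn ?_ (((continuous_const.sub continuous_id).pow 2).mul (hcu.pow 2))
    have h : Rdec (fun t => (ξ - t) * ((ξ - t) * (u t * u t))) := (hRu2.shift ξ).shift ξ
    exact h.of_eq fun t => by ring
  have hiu2 : IntegrableOn (fun t : ℝ => u t ^ 2) (Set.Ioi (0 : ℝ)) volume := by
    refine Rdec.integrableOn ?_ (hcu.pow 2)
    exact hRu2.of_eq fun t => by ring
  have hsum : ∫ t in Set.Ioi (0 : ℝ), (g₂ t + g₃ t)
      = (0 - F₂ 0) + (0 - F₃ 0) := by
    rw [integral_add hig₂ hig₃, eq₂, eq₃]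
  have hsplit : ∫ t in Set.Ioi (0 : ℝ), (g₂ t + g₃ t)
      = 4 * (∫ t in Set.Ioi (0 : ℝ), (ξ - t) ^ 2 * u t ^ 2)
        + (2 - 2 * ν) * ∫ t in Set.Ioi (0 : ℝ), u t ^ 2 := by
    have hfe : (fun t : ℝ => g₂ t + g₃ t)
        = fun t => 4 * ((ξ - t) ^ 2 * u t ^ 2) + (2 - 2 * ν) * u t ^ 2 := by
      funext t
      simp only [hg₂, hg₃]
      ring
    rw [hfe, integral_add (hisq.const_mul 4) (hiu2.const_mul (2 - 2 * ν)),
      integral_const_mul, integral_const_mul]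
  have goal2 : ∫ t in Set.Ioi (0 : ℝ), (ξ - t) ^ 2 * u t ^ 2
      = (ν - 1) / 2
        + u 0 ^ 2 / 4 * (-(α - ξ) + ξ * (ξ ^ 2 + 1 - ν - (α - ξ) ^ 2)) := by
    rw [hnorm] at hsplit
    have hF₂0 : F₂ 0 = u 0 * deriv u 0 := by simp [hF₂]
    have hF₃0 : F₃ 0 = ξ * ((deriv u 0) ^ 2 - (ξ ^ 2 + 1 - ν) * (u 0) ^ 2) := by
      simp [hF₃]
    have hkey := hsplit.symm.trans hsum
    rw [hF₂0, hF₃0] at hkey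
    linear_combination hkey / 4
      + (-(u 0) / 4 - ξ * (deriv u 0 + (α - ξ) * u 0) / 4) * hRobin
  exact ⟨goal1, goal2⟩
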